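/- arXiv:2004.07918 — 3 statements merged into one kernel-verified Lean document; each statement's English description precedes it below -/
import Mathlib

section
/- Let H be a (d,k,r,x)-squid with d(r+k) = |V(H)|. Then γ_p^k(H) = d. -/
/-- A hypergraph on vertex type `V`, given by its finite set of (finite) edges. -/
structure FinHypergraph (V : Type*) where
  edges : Finset (Finset V)

namespace FinHypergraph

variable {V : Type*}

/-- Two vertices are adjacent iff they are distinct and share an edge. -/
def Adj (H : FinHypergraph V) (u v : V) : Prop :=
  u ≠ v ∧ ∃ e ∈ H.edges, u ∈ e ∧ v ∈ e

/-- The underlying adjacency (simple) graph of a hypergraph. -/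
def graph (H : FinHypergraph V) : SimpleGraph V where
  Adj := H.Adj
  symm := by
    constructor
    rintro u v ⟨hne, e, he, hu, hv⟩
    exact ⟨hne.symm, e, he, hv, hu⟩
  loopless := by
    constructor
    rintro u ⟨hne, -⟩
    exact hne rfl

/-- Closed neighborhood of a set of vertices. -/
def closedNbhd (H : FinHypergraph V) (S : Set V) : Set V :=
  S ∪ {u | ∃ v ∈ S, H.Adj v u}

/-- `F` is a set of edges through `v` covering all neighbors of `v` outside `S`. -/
def Covers (H : FinHypergraph V) (v : V) (S : Set V) (F : Finset (Finset V)) : Prop :=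
  F ⊆ H.edges ∧ (∀ e ∈ F, v ∈ e) ∧ ∀ u, H.Adj v u → u ∉ S → ∃ e ∈ F, u ∈ e

/-- The white degree of `v` with respect to the blue set `S`: the minimum number of
edges containing `v` that cover all neighbors of `v` outside `S`. -/
noncomputable def wdeg (H : FinHypergraph V) (v : V) (S : Set V) : ℕ :=
  sInf {t | ∃ F, H.Covers v S F ∧ F.card ≤ t}

/-- One step of the `k`-forcing propagation: every blue vertex whose white
neighbors can be covered by at most `k` incident edges forces its neighbors blue. -/
def step (H : FinHypergraph V) (k : ℕ) (S : Set V) : Set V :=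
  S ∪ {u | ∃ v ∈ S, H.Adj v u ∧ H.wdeg v S ≤ k}

/-- `D` is a `k`-power dominating set if iterating the propagation from `N[D]`
colors every vertex blue. -/
def IsPDS (H : FinHypergraph V) (k : ℕ) (D : Set V) : Prop :=
  ∃ t : ℕ, (H.step k)^[t] (H.closedNbhd D) = Set.univ

/-- The `k`-power domination number. -/
noncomputable def pdn (H : FinHypergraph V) (k : ℕ) : ℕ :=
  sInf {t | ∃ D : Finset V, H.IsPDS k ↑D ∧ D.card ≤ t}

/-- A dominating set. -/
def Dominating (H : FinHypergraph V) (S : Set V) : Prop :=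
  H.closedNbhd S = Set.univ

/-- The domination number. -/
noncomputable def gamma (H : FinHypergraph V) : ℕ :=
  sInf {t | ∃ D : Finset V, H.Dominating ↑D ∧ D.card ≤ t}

/-- An `r`-uniform hypergraph. -/
def Uniform (H : FinHypergraph V) (r : ℕ) : Prop :=
  ∀ e ∈ H.edges, e.card = r

/-- Connectivity of the underlying adjacency graph. -/
def Connected (H : FinHypergraph V) : Prop := H.graph.Connected

/-- No isolated vertices: every vertex lies in some edge. -/
def NoIsolated (H : FinHypergraph V) : Prop :=
  ∀ v : V, ∃ e ∈ H.edges, v ∈ e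

/-- External private neighbors of `v` with respect to `D`. -/
def epn (H : FinHypergraph V) (v : V) (D : Set V) : Set V :=
  {u | u ∉ D ∧ H.Adj v u ∧ ∀ w ∈ D, w ≠ v → ¬ H.Adj w u}

/-- Number of connected components of the subhypergraph induced on `D`
(with respect to adjacency within `D`). -/
noncomputable def numComponents (H : FinHypergraph V) (D : Set V) : ℕ :=
  Nat.card (SimpleGraph.ConnectedComponent (SimpleGraph.induce D H.graph))

end FinHypergraph

/-- A `(d,k,r,x)`-squid structure on a hypergraph `H`: `d` spines, the `i`-th spine
having `r - x i` strong and `k + x i` weak vertices, with `k+1` in-spine edges each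
containing all the strong vertices of the spine, together covering the spine's weak
vertices, no proper subfamily covering them; every edge containing a weak vertex is
one of its spine's edges, `H` is `r`-uniform and connected. -/
structure Squid {V : Type*} [Fintype V] [DecidableEq V] (H : FinHypergraph V)
    (d k r : ℕ) (x : Fin d → ℕ) where
  strong : Fin d → Finset V
  weak : Fin d → Finset V
  spineEdges : Fin d → Finset (Finset V)
  x_pos : ∀ i, 1 ≤ x i
  x_le : ∀ i, x i ≤ r - 1
  strong_card : ∀ i, (strong i).card = r - x i
  weak_card : ∀ i, (weak i).card = k + x i
  strong_weak_disj : ∀ i, Disjoint (strong i) (weak i)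
  spine_disj : ∀ i j, i ≠ j → Disjoint (strong i ∪ weak i) (strong j ∪ weak j)
  vertex_partition :
    (Finset.univ : Finset V) = Finset.univ.biUnion (fun i => strong i ∪ weak i)
  spineEdges_sub : ∀ i, spineEdges i ⊆ H.edges
  spineEdges_card : ∀ i, (spineEdges i).card = k + 1
  spineEdges_strong : ∀ i, ∀ e ∈ spineEdges i, strong i ⊆ e ∧ e ⊆ strong i ∪ weak i
  spineEdges_cover : ∀ i, weak i ⊆ (spineEdges i).biUnion id
  no_proper_cover : ∀ i, ∀ F ⊂ spineEdges i, ¬ weak i ⊆ F.biUnion id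
  weak_edge_in_spine : ∀ e ∈ H.edges, ∀ i, (∃ w ∈ weak i, w ∈ e) → e ∈ spineEdges i
  uniform : H.Uniform r
  connected : H.Connected

open FinHypergraph in
/-- If `H` is a `(d,k,r,x)`-squid with `d(r+k) = |V(H)|`, then
`γ_p^k(H) = d`. -/
theorem squid_pdn_eq {V : Type*} [Fintype V] [DecidableEq V] (H : FinHypergraph V)
    (d k r : ℕ) (x : Fin d → ℕ) (hd : 1 ≤ d) (hk : 1 ≤ k) (hr : 2 ≤ r)
    (sq : Squid H d k r x) (hcard : d * (r + k) = Fintype.card V) :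
    H.pdn k = d := by
  classical
  -- basic nonemptiness facts
  have hstrongne : ∀ i, (sq.strong i).Nonempty := by
    intro i
    rw [← Finset.card_pos, sq.strong_card]
    have h1 := sq.x_le i
    omega
  have hweakne : ∀ i, (sq.weak i).Nonempty := by
    intro i
    rw [← Finset.card_pos, sq.weak_card]
    omega
  have hedgene : ∀ i, (sq.spineEdges i).Nonempty := by
    intro i
    rw [← Finset.card_pos, sq.spineEdges_card]
    omega
  have hmemspine : ∀ u : V, ∃ i, u ∈ sq.strong i ∪ sq.weak i := by
    intro u
    have hu : u ∈ (Finset.univ : Finset V) := Finset.mem_univ u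
    rw [sq.vertex_partition] at hu
    obtain ⟨i, -, hi⟩ := Finset.mem_biUnion.mp hu
    exact ⟨i, hi⟩
  have hmemedge : ∀ i, ∀ u ∈ sq.strong i ∪ sq.weak i, ∃ e ∈ sq.spineEdges i, u ∈ e := by
    intro i u hu
    rcases Finset.mem_union.mp hu with h | h
    · obtain ⟨e, he⟩ := hedgene i
      exact ⟨e, he, (sq.spineEdges_strong i e he).1 h⟩
    · have hc := sq.spineEdges_cover i h
      obtain ⟨e, he, hue⟩ := Finset.mem_biUnion.mp hc
      exact ⟨e, he, hue⟩
  -- adjacency from a strong vertex to any other spine vertex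
  have hadj : ∀ i, ∀ s ∈ sq.strong i, ∀ u ∈ sq.strong i ∪ sq.weak i, u ≠ s → H.Adj s u := by
    intro i s hs u hu hne
    obtain ⟨e, he, hue⟩ := hmemedge i u hu
    exact ⟨hne.symm, e, sq.spineEdges_sub i he, (sq.spineEdges_strong i e he).1 hs, hue⟩
  -- the upper-bound dominating set
  have hschoice : ∀ i, ∃ v, v ∈ sq.strong i := fun i => hstrongne i
  choose s hs using hschoice
  set D0 : Finset V := Finset.univ.image s with hD0
  have hdom : H.closedNbhd ↑D0 = Set.univ := by
    ext u
    simp only [Set.mem_univ, iff_true, FinHypergraph.closedNbhd, Set.mem_union,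
      Set.mem_setOf_eq]
    obtain ⟨i, hi⟩ := hmemspine u
    by_cases h : u = s i
    · left
      simp only [hD0, Finset.coe_image, Set.mem_image, Finset.mem_coe]
      exact ⟨i, Finset.mem_univ i, h.symm⟩
    · right
      refine ⟨s i, ?_, hadj i (s i) (hs i) u hi h⟩
      simp only [hD0, Finset.coe_image, Set.mem_image, Finset.mem_coe]
      exact ⟨i, Finset.mem_univ i, rfl⟩
  have hPDS0 : H.IsPDS k ↑D0 := ⟨0, by simpa using hdom⟩
  have hcard0 : D0.card ≤ d := by
    calc D0.card ≤ (Finset.univ : Finset (Fin d)).card := Finset.card_image_le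
    _ = d := by simp
  -- key invariant: if all weak vertices of spine i are white, they stay white
  have key : ∀ (i : Fin d) (S : Set V), (∀ w ∈ sq.weak i, w ∉ S) →
      ∀ w ∈ sq.weak i, w ∉ H.step k S := by
    intro i S hS w hw hmem
    rcases hmem with h | ⟨v, hvS, hadjvw, hwdeg⟩
    · exact hS w hw h
    · obtain ⟨hne, e, heE, hve, hwe⟩ := hadjvw
      have heS : e ∈ sq.spineEdges i := sq.weak_edge_in_spine e heE i ⟨w, hw, hwe⟩
      have hvspine : v ∈ sq.strong i ∪ sq.weak i := (sq.spineEdges_strong i e heS).2 hve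
      have hvstrong : v ∈ sq.strong i := by
        rcases Finset.mem_union.mp hvspine with h | h
        · exact h
        · exact absurd hvS (hS v h)
      -- the Covers set is nonempty, so sInf is attained
      have hne' : {t | ∃ F, H.Covers v S F ∧ F.card ≤ t}.Nonempty := by
        refine ⟨(H.edges.filter (fun e => v ∈ e)).card,
          H.edges.filter (fun e => v ∈ e),
          ⟨Finset.filter_subset _ _, fun e he => (Finset.mem_filter.mp he).2, ?_⟩, le_rfl⟩
        rintro u ⟨hne2, e2, heE2, hve2, hue2⟩ -
        exact ⟨e2, Finset.mem_filter.mpr ⟨heE2, hve2⟩, hue2⟩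
      obtain ⟨F, hF, hFcard⟩ := Nat.sInf_mem hne'
      have hFk : F.card ≤ k := hFcard.trans hwdeg
      -- all spine edges of spine i must be in F
      have hsubcov : sq.weak i ⊆ (F ∩ sq.spineEdges i).biUnion id := by
        intro w' hw'
        have hnew' : w' ≠ v := by
          intro hEq
          exact (Finset.disjoint_left.mp (sq.strong_weak_disj i)) hvstrong (hEq ▸ hw')
        have hadjvw' : H.Adj v w' :=
          hadj i v hvstrong w' (Finset.mem_union_right _ hw') hnew'
        obtain ⟨e', he'F, hw'e'⟩ := hF.2.2 w' hadjvw' (hS w' hw')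
        have he'S : e' ∈ sq.spineEdges i :=
          sq.weak_edge_in_spine e' (hF.1 he'F) i ⟨w', hw', hw'e'⟩
        exact Finset.mem_biUnion.mpr ⟨e', Finset.mem_inter.mpr ⟨he'F, he'S⟩, hw'e'⟩
      have hnotss : ¬ (F ∩ sq.spineEdges i ⊂ sq.spineEdges i) :=
        fun h => sq.no_proper_cover i _ h hsubcov
      have heq : F ∩ sq.spineEdges i = sq.spineEdges i := by
        rcases (Finset.inter_subset_right (s₁ := F)
          (s₂ := sq.spineEdges i)).eq_or_ssubset with h | h
        · exact h
        · exact absurd h hnotss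
      have hk1 : k + 1 ≤ F.card := by
        calc k + 1 = (sq.spineEdges i).card := (sq.spineEdges_card i).symm
        _ = (F ∩ sq.spineEdges i).card := by rw [heq]
        _ ≤ F.card := Finset.card_le_card Finset.inter_subset_left
      omega
  -- any PDS must meet every spine
  have hmeet : ∀ (D : Finset V), H.IsPDS k ↑D → ∀ i, ∃ u ∈ D, u ∈ sq.strong i ∪ sq.weak i := by
    intro D hPDS i
    by_contra hno
    push_neg at hno
    have hbase : ∀ w ∈ sq.weak i, w ∉ H.closedNbhd ↑D := by
      intro w hw hmem
      rcases hmem with h | ⟨v, hvD, hadjvw⟩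
      · exact hno w h (Finset.mem_union_right _ hw)
      · obtain ⟨hne, e, heE, hve, hwe⟩ := hadjvw
        have heS : e ∈ sq.spineEdges i := sq.weak_edge_in_spine e heE i ⟨w, hw, hwe⟩
        exact hno v hvD ((sq.spineEdges_strong i e heS).2 hve)
    have hiter : ∀ t, ∀ w ∈ sq.weak i, w ∉ (H.step k)^[t] (H.closedNbhd ↑D) := by
      intro t
      induction t with
      | zero => simpa using hbase
      | succ n ih =>
        intro w hw
        rw [Function.iterate_succ_apply']
        exact key i _ ih w hw
    obtain ⟨t, ht⟩ := hPDS
    obtain ⟨w, hw⟩ := hweakne i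
    exact hiter t w hw (ht ▸ Set.mem_univ w)
  -- hence any PDS has cardinality at least d
  have hlow : ∀ (D : Finset V), H.IsPDS k ↑D → d ≤ D.card := by
    intro D hPDS
    choose g hgD hgspine using hmeet D hPDS
    have hinj : Set.InjOn g ↑(Finset.univ : Finset (Fin d)) := by
      intro i _ j _ hEq
      by_contra hij
      exact (Finset.disjoint_left.mp (sq.spine_disj i j hij)) (hgspine i)
        (hEq ▸ hgspine j)
    calc d = (Finset.univ : Finset (Fin d)).card := by simp
    _ ≤ D.card := Finset.card_le_card_of_injOn g (fun i _ => hgD i) hinj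
  -- conclude
  refine le_antisymm (Nat.sInf_le ⟨D0, hPDS0, hcard0⟩) (le_csInf ⟨d, D0, hPDS0, hcard0⟩ ?_)
  rintro t ⟨D, hPDS, hDt⟩
  exact (hlow D hPDS).trans hDt
end

section
/- For k ≥ 1 and the 3-edge hypergraph H with vertex set V_1 ∪ V_2 ∪ V_3 ∪ {v_{12}, v_{13}, v_{23}} (|V_1| = ⌊(r−1)/2⌋, |V_2| = |V_3| = ⌈(r−1)/2⌉, r ≥ 5), V'_2 ⊆ V_2 of size ⌊(r−1)/2⌋, and edges e_1 = V_1 ∪ V_2 ∪ {v_{12}}, e_2 = V_1 ∪ V_3 ∪ {v_{13}}, e_3 = V'_2 ∪ V_3 ∪ {v_{23}}, the singleton {u} for any u ∈ V_1 is a k-power dominating set, so γ_p^k(H) = 1. -/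
/-- A hypergraph on vertex type `V`, given by its finite set of (finite) edges. -/
structure FinsetHypergraph (V : Type*) where
  edges : Finset (Finset V)

namespace FinsetHypergraph

variable {V : Type*}

/-- Two vertices are adjacent iff they are distinct and share an edge. -/
def Adj (H : FinsetHypergraph V) (u v : V) : Prop :=
  u ≠ v ∧ ∃ e ∈ H.edges, u ∈ e ∧ v ∈ e

/-- The underlying adjacency (simple) graph of a hypergraph. -/
def graph (H : FinsetHypergraph V) : SimpleGraph V where
  Adj := H.Adj
  symm := by
    constructor
    rintro u v ⟨hne, e, he, hu, hv⟩
    exact ⟨hne.symm, e, he, hv, hu⟩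
  loopless := by
    constructor
    rintro u ⟨hne, -⟩
    exact hne rfl

/-- Closed neighborhood of a set of vertices. -/
def closedNbhd (H : FinsetHypergraph V) (S : Set V) : Set V :=
  S ∪ {u | ∃ v ∈ S, H.Adj v u}

/-- `F` is a set of edges through `v` covering all neighbors of `v` outside `S`. -/
def Covers (H : FinsetHypergraph V) (v : V) (S : Set V) (F : Finset (Finset V)) : Prop :=
  F ⊆ H.edges ∧ (∀ e ∈ F, v ∈ e) ∧ ∀ u, H.Adj v u → u ∉ S → ∃ e ∈ F, u ∈ e

/-- The white degree of `v` with respect to the blue set `S`: the minimum number of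
edges containing `v` that cover all neighbors of `v` outside `S`. -/
noncomputable def wdeg (H : FinsetHypergraph V) (v : V) (S : Set V) : ℕ :=
  sInf {t | ∃ F, H.Covers v S F ∧ F.card ≤ t}

/-- One step of the `k`-forcing propagation: every blue vertex whose white
neighbors can be covered by at most `k` incident edges forces its neighbors blue. -/
def step (H : FinsetHypergraph V) (k : ℕ) (S : Set V) : Set V :=
  S ∪ {u | ∃ v ∈ S, H.Adj v u ∧ H.wdeg v S ≤ k}

/-- `D` is a `k`-power dominating set if iterating the propagation from `N[D]`
colors every vertex blue. -/
def IsPDS (H : FinsetHypergraph V) (k : ℕ) (D : Set V) : Prop :=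
  ∃ t : ℕ, (H.step k)^[t] (H.closedNbhd D) = Set.univ

/-- The `k`-power domination number. -/
noncomputable def pdn (H : FinsetHypergraph V) (k : ℕ) : ℕ :=
  sInf {t | ∃ D : Finset V, H.IsPDS k ↑D ∧ D.card ≤ t}

/-- A dominating set. -/
def Dominating (H : FinsetHypergraph V) (S : Set V) : Prop :=
  H.closedNbhd S = Set.univ

/-- The domination number. -/
noncomputable def gamma (H : FinsetHypergraph V) : ℕ :=
  sInf {t | ∃ D : Finset V, H.Dominating ↑D ∧ D.card ≤ t}

/-- An `r`-uniform hypergraph. -/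
def Uniform (H : FinsetHypergraph V) (r : ℕ) : Prop :=
  ∀ e ∈ H.edges, e.card = r

/-- Connectivity of the underlying adjacency graph. -/
def Connected (H : FinsetHypergraph V) : Prop := H.graph.Connected

/-- No isolated vertices: every vertex lies in some edge. -/
def NoIsolated (H : FinsetHypergraph V) : Prop :=
  ∀ v : V, ∃ e ∈ H.edges, v ∈ e

/-- External private neighbors of `v` with respect to `D`. -/
def epn (H : FinsetHypergraph V) (v : V) (D : Set V) : Set V :=
  {u | u ∉ D ∧ H.Adj v u ∧ ∀ w ∈ D, w ≠ v → ¬ H.Adj w u}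

/-- Number of connected components of the subhypergraph induced on `D`
(with respect to adjacency within `D`). -/
noncomputable def numComponents (H : FinsetHypergraph V) (D : Set V) : ℕ :=
  Nat.card (SimpleGraph.ConnectedComponent (SimpleGraph.induce D H.graph))

end FinsetHypergraph

open FinsetHypergraph in
/-- In the 3-edge hypergraph with `|V₁| = ⌊(r−1)/2⌋`,
`|V₂| = |V₃| = ⌈(r−1)/2⌉`, `V₂' ⊆ V₂` of size `⌊(r−1)/2⌋`, and edges
`e₁ = V₁ ∪ V₂ ∪ {v₁₂}`, `e₂ = V₁ ∪ V₃ ∪ {v₁₃}`, `e₃ = V₂' ∪ V₃ ∪ {v₂₃}`,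
any singleton `{u}` with `u ∈ V₁` is a `k`-power dominating set (`k ≥ 1`),
so `γ_p^k(H) = 1`. -/
theorem three_edge_pdn_one {V : Type*} [Fintype V] [DecidableEq V]
    (H : FinsetHypergraph V) (r k : ℕ) (hr : 5 ≤ r) (hk : 1 ≤ k)
    (V1 V2 V3 V2' : Finset V) (v12 v13 v23 : V)
    (hV1 : V1.card = (r - 1) / 2) (hV2 : V2.card = r / 2) (hV3 : V3.card = r / 2)
    (hV2' : V2' ⊆ V2) (hV2'card : V2'.card = (r - 1) / 2)
    (hdisj : List.Pairwise Disjoint [V1, V2, V3, ({v12} : Finset V), {v13}, {v23}])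
    (huniv : V1 ∪ V2 ∪ V3 ∪ {v12, v13, v23} = Finset.univ)
    (hedges : H.edges = {V1 ∪ V2 ∪ {v12}, V1 ∪ V3 ∪ {v13}, V2' ∪ V3 ∪ {v23}}) :
    (∀ u ∈ V1, H.IsPDS k {u}) ∧ H.pdn k = 1 := by
  -- basic disjointness facts
  have hd : Disjoint V3 ({v23} : Finset V) := by
    simp only [List.pairwise_cons] at hdisj
    exact hdisj.2.2.1 {v23} (by simp)
  have hv23V3 : v23 ∉ V3 := by
    intro h
    exact Finset.disjoint_left.mp hd h (Finset.mem_singleton_self _)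
  have hV3ne : V3.Nonempty := by
    rw [← Finset.card_pos, hV3]; omega
  obtain ⟨w, hw⟩ := hV3ne
  have hV1ne : V1.Nonempty := by
    rw [← Finset.card_pos, hV1]; omega
  obtain ⟨u₀, hu₀⟩ := hV1ne
  have he1 : (V1 ∪ V2 ∪ {v12}) ∈ H.edges := by rw [hedges]; simp
  have he2 : (V1 ∪ V3 ∪ {v13}) ∈ H.edges := by rw [hedges]; simp
  have he3 : (V2' ∪ V3 ∪ {v23}) ∈ H.edges := by rw [hedges]; simp
  have key : ∀ u ∈ V1, H.IsPDS k {u} := by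
    intro u hu
    refine ⟨1, ?_⟩
    have hue1 : u ∈ V1 ∪ V2 ∪ {v12} := by simp [hu]
    have hue2 : u ∈ V1 ∪ V3 ∪ {v13} := by simp [hu]
    have hS0 : ∀ x : V, x ≠ v23 → x ∈ H.closedNbhd ({u} : Set V) := by
      intro x hx
      have hxmem : x ∈ V1 ∪ V2 ∪ {v12} ∨ x ∈ V1 ∪ V3 ∪ {v13} := by
        have hx' : x ∈ V1 ∪ V2 ∪ V3 ∪ {v12, v13, v23} := by
          rw [huniv]; exact Finset.mem_univ x
        simp only [Finset.mem_union, Finset.mem_insert, Finset.mem_singleton] at hx' ⊢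
        tauto
      by_cases hxu : x = u
      · exact Or.inl (by simp [hxu])
      · refine Or.inr ⟨u, rfl, ?_⟩
        rcases hxmem with h | h
        · exact ⟨Ne.symm hxu, _, he1, hue1, h⟩
        · exact ⟨Ne.symm hxu, _, he2, hue2, h⟩
    have hwne : w ≠ v23 := by rintro rfl; exact hv23V3 hw
    have hwS0 : w ∈ H.closedNbhd ({u} : Set V) := hS0 w hwne
    have hwe3 : w ∈ V2' ∪ V3 ∪ {v23} := by simp [hw]
    have hadj : H.Adj w v23 := ⟨hwne, _, he3, hwe3, by simp⟩
    have hwdeg : H.wdeg w (H.closedNbhd ({u} : Set V)) ≤ k := by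
      have h1 : (1 : ℕ) ∈ {t | ∃ F, H.Covers w (H.closedNbhd ({u} : Set V)) F ∧ F.card ≤ t} := by
        refine ⟨{V2' ∪ V3 ∪ {v23}}, ⟨?_, ?_, ?_⟩, by simp⟩
        · simpa using he3
        · intro e he
          rw [Finset.mem_singleton] at he; subst he; exact hwe3
        · intro x _ hxS
          have hx23 : x = v23 := by
            by_contra hne
            exact hxS (hS0 x hne)
          exact ⟨_, Finset.mem_singleton_self _, by simp [hx23]⟩
      calc H.wdeg w (H.closedNbhd ({u} : Set V)) ≤ 1 := Nat.sInf_le h1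
        _ ≤ k := hk
    rw [Function.iterate_one]
    apply Set.eq_univ_of_forall
    intro x
    by_cases hx : x = v23
    · exact Or.inr ⟨w, hwS0, hx ▸ hadj, hwdeg⟩
    · exact Or.inl (hS0 x hx)
  refine ⟨key, ?_⟩
  have h1mem : (1 : ℕ) ∈ {t | ∃ D : Finset V, H.IsPDS k ↑D ∧ D.card ≤ t} :=
    ⟨{u₀}, by simpa using key u₀ hu₀, by simp⟩
  refine le_antisymm (Nat.sInf_le h1mem) ?_
  rcases Nat.eq_zero_or_pos (H.pdn k) with h0 | h1
  · exfalso
    rcases (Nat.sInf_eq_zero.mp h0) with hmem | hemp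
    · obtain ⟨D, hPDS, hD0⟩ := hmem
      have hDe : D = ∅ := Finset.card_eq_zero.mp (Nat.le_zero.mp hD0)
      subst hDe
      obtain ⟨t, ht⟩ := hPDS
      have hcn : H.closedNbhd (∅ : Set V) = ∅ := by
        simp [FinsetHypergraph.closedNbhd]
      have hst : H.step k (∅ : Set V) = ∅ := by
        simp [FinsetHypergraph.step]
      rw [Finset.coe_empty, hcn, Function.iterate_fixed hst t] at ht
      exact (Set.notMem_empty v23) (ht ▸ Set.mem_univ v23)
    · exact absurd h1mem (hemp ▸ Set.notMem_empty 1)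
  · exact h1
end

section
/- Let H be a hypergraph, D a k-power dominating set of H, v ∈ D, and suppose deg_w(v, N[D\{v}]) ≤ k. If additionally v is adjacent to some other vertex of D, then D\{v} is a k-power dominating set of H; hence no minimum k-power dominating set contains a vertex v with deg_w(v, N[D\{v}]) ≤ k that is adjacent to another vertex of D. -/
section Aux

open FinHypergraph

variable {V : Type*}

lemma covers_nonempty [DecidableEq V] (H : FinHypergraph V) (v : V) (S : Set V) :
    ∃ F, H.Covers v S F := by
  refine ⟨H.edges.filter (fun e => v ∈ e), Finset.filter_subset _ _, ?_, ?_⟩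
  · intro e he; exact (Finset.mem_filter.mp he).2
  · rintro w ⟨hne, e, he, hv, hw⟩ -
    exact ⟨e, Finset.mem_filter.mpr ⟨he, hv⟩, hw⟩

lemma wdeg_anti [DecidableEq V] (H : FinHypergraph V) (v : V) {S T : Set V} (h : S ⊆ T) :
    H.wdeg v T ≤ H.wdeg v S := by
  apply csInf_le_csInf (OrderBot.bddBelow _)
  · obtain ⟨F, hF⟩ := covers_nonempty H v S
    exact ⟨F.card, F, hF, le_rfl⟩
  · rintro t ⟨F, ⟨h1, h2, h3⟩, hc⟩
    exact ⟨F, ⟨h1, h2, fun w ha hw => h3 w ha (fun hS => hw (h hS))⟩, hc⟩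

lemma step_mono [DecidableEq V] (H : FinHypergraph V) (k : ℕ) {S T : Set V} (h : S ⊆ T) :
    H.step k S ⊆ H.step k T := by
  rintro x (hx | ⟨w, hwS, hadj, hwd⟩)
  · exact Or.inl (h hx)
  · exact Or.inr ⟨w, h hwS, hadj, le_trans (wdeg_anti H w h) hwd⟩

lemma step_iterate_mono [DecidableEq V] (H : FinHypergraph V) (k : ℕ) {S T : Set V}
    (h : S ⊆ T) (t : ℕ) : (H.step k)^[t] S ⊆ (H.step k)^[t] T := by
  induction t generalizing S T with
  | zero => exact h
  | succ n ih =>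
    rw [Function.iterate_succ_apply, Function.iterate_succ_apply]
    exact ih (step_mono H k h)

end Aux

open FinHypergraph in
/-- If `D` is a `k`-power dominating set, `v ∈ D` has
`deg_w(v, N[D \ {v}]) ≤ k`, and `v` is adjacent to another vertex of `D`, then
`D \ {v}` is a `k`-power dominating set; hence `D` is not minimum, i.e. no minimum
`k`-power dominating set contains such a vertex. -/
theorem remove_vertex_kPDS {V : Type*} [DecidableEq V]
    (H : FinHypergraph V) (k : ℕ) (D : Finset V) (v u : V)
    (hD : H.IsPDS k ↑D) (hv : v ∈ D)
    (hw : H.wdeg v (H.closedNbhd (↑D \ {v})) ≤ k)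
    (hu : u ∈ D) (huv : u ≠ v) (hadj : H.Adj u v) :
    H.IsPDS k ↑(D.erase v) ∧ H.pdn k < D.card := by
  have hcoe : (↑(D.erase v) : Set V) = (↑D : Set V) \ {v} := by
    simp [Finset.coe_erase]
  have hvN : v ∈ H.closedNbhd ↑(D.erase v) :=
    Or.inr ⟨u, by simpa [hcoe] using (⟨hu, huv⟩ : u ∈ D ∧ u ≠ v), hadj⟩
  have hwd : H.wdeg v (H.closedNbhd ↑(D.erase v)) ≤ k := by rwa [hcoe]
  have hND : H.closedNbhd ↑D ⊆ H.step k (H.closedNbhd ↑(D.erase v)) := by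
    rintro x (hx | ⟨w, hwD, hadjw⟩)
    · by_cases hxv : x = v
      · exact Or.inl (hxv ▸ hvN)
      · exact Or.inl (Or.inl (by simp [hcoe, hx, hxv]))
    · by_cases hwv : w = v
      · exact Or.inr ⟨v, hvN, hwv ▸ hadjw, hwd⟩
      · exact Or.inl (Or.inr ⟨w, by simp [hcoe, hwD, hwv], hadjw⟩)
  obtain ⟨t, ht⟩ := hD
  have hPDS : H.IsPDS k ↑(D.erase v) := by
    refine ⟨t + 1, ?_⟩
    apply Set.eq_univ_of_univ_subset
    calc Set.univ = (H.step k)^[t] (H.closedNbhd ↑D) := ht.symm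
      _ ⊆ (H.step k)^[t] (H.step k (H.closedNbhd ↑(D.erase v))) :=
          step_iterate_mono H k hND t
      _ = (H.step k)^[t+1] (H.closedNbhd ↑(D.erase v)) := by
          rw [Function.iterate_succ_apply]
  refine ⟨hPDS, ?_⟩
  have h1 : H.pdn k ≤ (D.erase v).card :=
    Nat.sInf_le ⟨D.erase v, hPDS, le_rfl⟩
  calc H.pdn k ≤ (D.erase v).card := h1
    _ < D.card := Finset.card_erase_lt_of_mem hv
end
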